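/- Let d be a non-eclipsed 2-Duke in a multipartite tournament. Then at least one of the following holds: (i) there exists a 1-Duke; (ii) some 2-Duke has an arc to d; (iii) there exist three distinct 2-Dukes; (iv) there exist four distinct 3-Dukes. -/
import Mathlib


/-- An orientation of a complete multipartite graph: vertices `V`, partite sets
given as fibers of `part : V → ι`, and `peck` the arc relation. Between any two
vertices in different partite sets there is exactly one arc, and there are no
arcs within a partite set. -/
structure MTour (V : Type*) (ι : Type*) where
  part : V → ι
  peck : V → V → Prop
  complete : ∀ u v, part u ≠ part v → peck u v ∨ peck v u
  inter : ∀ u v, peck u v → part u ≠ part v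
  asymm : ∀ u v, peck u v → ¬ peck v u

namespace MTour

variable {V ι : Type*}

/-- There is a directed path of length at most `m` from `d` to `c`. -/
def hasPath (T : MTour V ι) (m : ℕ) (d c : V) : Prop :=
  ∃ k ≤ m, ∃ f : ℕ → V, f 0 = d ∧ f k = c ∧ ∀ i < k, T.peck (f i) (f (i + 1))

/-- `d` is an `m`-Duke: every vertex in a different partite set is reachable
from `d` by a directed path of length at most `m`. -/
def isDuke (T : MTour V ι) (m : ℕ) (d : V) : Prop :=
  ∀ c, T.part c ≠ T.part d → T.hasPath m d c

/-- `d` is an `m`-King: every other vertex is reachable from `d` by a directed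
path of length at most `m`. -/
def isKing (T : MTour V ι) (m : ℕ) (d : V) : Prop :=
  ∀ c, c ≠ d → T.hasPath m d c

/-- The out-degree of a vertex. -/
noncomputable def outDeg (T : MTour V ι) (v : V) : ℕ :=
  Nat.card {w // T.peck v w}

/-- `e` eclipses `d`: same partite set, `e` pecks everything `d` pecks, and
at least one vertex `d` does not peck. -/
def eclipses (T : MTour V ι) (e d : V) : Prop :=
  T.part e = T.part d ∧ (∀ c, T.peck d c → T.peck e c) ∧ ∃ c, T.peck e c ∧ ¬ T.peck d c

/-- `d` is non-eclipsed: no vertex of its partite set eclipses it. -/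
def nonEclipsed (T : MTour V ι) (d : V) : Prop :=
  ∀ e, ¬ T.eclipses e d

/-- Partite set `i` dominates partite set `j`: some vertex of `i` pecks all of `j`. -/
def Dominates (T : MTour V ι) (i j : ι) : Prop :=
  ∃ v, T.part v = i ∧ ∀ w, T.part w = j → T.peck v w

end MTour

section Aux
variable {V ι : Type*} {T : MTour V ι}

lemma peck_ne {u v : V} (h : T.peck u v) : u ≠ v :=
  fun e => T.inter u v h (by rw [e])

lemma path1 {u v : V} (h : T.peck u v) {m : ℕ} (hm : 1 ≤ m) : T.hasPath m u v := by
  refine ⟨1, hm, fun i => if i = 0 then u else v, by simp, by simp, ?_⟩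
  intro i hi
  interval_cases i
  simpa using h

lemma path2 {u x v : V} (h1 : T.peck u x) (h2 : T.peck x v) {m : ℕ} (hm : 2 ≤ m) :
    T.hasPath m u v := by
  refine ⟨2, hm, fun i => if i = 0 then u else if i = 1 then x else v, by simp, by simp, ?_⟩
  intro i hi
  interval_cases i <;> simp [h1, h2]

lemma path3 {u x y v : V} (h1 : T.peck u x) (h2 : T.peck x y) (h3 : T.peck y v) {m : ℕ}
    (hm : 3 ≤ m) : T.hasPath m u v := by
  refine ⟨3, hm, fun i => if i = 0 then u else if i = 1 then x else if i = 2 then y else v,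
    by simp, by simp, ?_⟩
  intro i hi
  interval_cases i <;> simp [h1, h2, h3]

lemma pathCons {u v c : V} {m : ℕ} (h : T.peck u v) (hp : T.hasPath m v c) :
    T.hasPath (m + 1) u c := by
  obtain ⟨k, hk, f, h0, hke, hs⟩ := hp
  refine ⟨k + 1, by omega, fun i => if i = 0 then u else f (i - 1), by simp, by simp [hke], ?_⟩
  intro i hi
  rcases Nat.eq_zero_or_pos i with rfl | hipos
  · simpa [h0] using h
  · have h1 : i ≠ 0 := hipos.ne'
    have h2 : i + 1 ≠ 0 := by omega
    simp only [if_neg h1, if_neg h2]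
    have h3 : i + 1 - 1 = i - 1 + 1 := by omega
    rw [h3]
    exact hs (i - 1) (by omega)

lemma dukeMono {d : V} {m m' : ℕ} (h : m ≤ m') (hd : T.isDuke m d) : T.isDuke m' d := by
  intro c hc
  obtain ⟨k, hk, rest⟩ := hd c hc
  exact ⟨k, hk.trans h, rest⟩

lemma eclipseCases {d : V} (hne : T.nonEclipsed d) (c : V) (hc : T.part c = T.part d) :
    (∃ w, T.peck d w ∧ ¬ T.peck c w) ∨ (∀ w, T.peck c w → T.peck d w) := by
  have h := hne c
  rw [MTour.eclipses] at h
  push_neg at h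
  by_cases hB : ∀ w, T.peck d w → T.peck c w
  · exact Or.inr (h hc hB)
  · push_neg at hB
    exact Or.inl hB

/-- Every in-neighbor of a non-eclipsed 2-Duke is a 3-Duke. -/
lemma inNbrDuke {d b : V} (hd : T.isDuke 2 d) (hne : T.nonEclipsed d) (hb : T.peck b d) :
    T.isDuke 3 b := by
  intro c hc
  by_cases hcd : c = d
  · subst hcd; exact path1 hb (by norm_num)
  by_cases hcpd : T.part c = T.part d
  · rcases eclipseCases hne c hcpd with ⟨w, hdw, hncw⟩ | hsub
    · have hwc : T.peck w c := by
        rcases T.complete w c (fun e => T.inter d w hdw (hcpd ▸ e).symm) with h | h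
        · exact h
        · exact absurd h hncw
      exact path3 hb hdw hwc le_rfl
    · rcases T.complete b c (Ne.symm hc) with h | h
      · exact path1 h (by norm_num)
      · exact absurd hb (T.asymm d b (hsub b h))
  · exact pathCons hb (hd c hcpd)

end Aux



/-- If `d` is a non-eclipsed 2-Duke in a multipartite tournament, then a
1-Duke exists, or some 2-Duke pecks `d`, or there are three distinct 2-Dukes,
or there are four distinct 3-Dukes. -/
theorem stmt10 {V ι : Type*} [Finite V] (T : MTour V ι) (d : V)
    (hd : T.isDuke 2 d) (hne : T.nonEclipsed d) :
    (∃ v, T.isDuke 1 v) ∨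
    (∃ v, T.isDuke 2 v ∧ T.peck v d) ∨
    (∃ v₁ v₂ v₃, v₁ ≠ v₂ ∧ v₁ ≠ v₃ ∧ v₂ ≠ v₃ ∧
      T.isDuke 2 v₁ ∧ T.isDuke 2 v₂ ∧ T.isDuke 2 v₃) ∨
    (∃ v₁ v₂ v₃ v₄, v₁ ≠ v₂ ∧ v₁ ≠ v₃ ∧ v₁ ≠ v₄ ∧ v₂ ≠ v₃ ∧ v₂ ≠ v₄ ∧ v₃ ≠ v₄ ∧
      T.isDuke 3 v₁ ∧ T.isDuke 3 v₂ ∧ T.isDuke 3 v₃ ∧ T.isDuke 3 v₄) := by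
  classical
  by_cases h1 : ∃ v, T.isDuke 1 v
  · exact Or.inl h1
  by_cases h2 : ∃ v, T.isDuke 2 v ∧ T.peck v d
  · exact Or.inr (Or.inl h2)
  right; right; right
  push_neg at h1 h2
  have hd3 : T.isDuke 3 d := dukeMono (by norm_num) hd
  -- there is an in-neighbor of d
  have exb : ∃ b, T.peck b d := by
    have h := h1 d
    rw [MTour.isDuke] at h
    push_neg at h
    obtain ⟨c, hc, hcp⟩ := h
    have hndc : ¬ T.peck d c := fun hp => hcp (path1 hp le_rfl)
    rcases T.complete c d hc with h | h
    · exact ⟨c, h⟩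
    · exact absurd h hndc
  by_cases h3 : ∃ b₁ b₂ b₃, b₁ ≠ b₂ ∧ b₁ ≠ b₃ ∧ b₂ ≠ b₃ ∧
      T.peck b₁ d ∧ T.peck b₂ d ∧ T.peck b₃ d
  · obtain ⟨b₁, b₂, b₃, h12, h13, h23, p1, p2, p3⟩ := h3
    exact ⟨d, b₁, b₂, b₃, (peck_ne p1).symm, (peck_ne p2).symm, (peck_ne p3).symm,
      h12, h13, h23, hd3, inNbrDuke hd hne p1, inNbrDuke hd hne p2, inNbrDuke hd hne p3⟩
  by_cases h4 : ∃ b₁ b₂, b₁ ≠ b₂ ∧ T.peck b₁ d ∧ T.peck b₂ d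
  · -- exactly two in-neighbors
    obtain ⟨b₁, b₂, hb12, p1, p2⟩ := h4
    have huniq : ∀ b', T.peck b' d → b' = b₁ ∨ b' = b₂ := by
      intro b' hb'
      by_contra hcon
      push_neg at hcon
      exact h3 ⟨b₁, b₂, b', hb12, hcon.1.symm, hcon.2.symm, p1, p2, hb'⟩
    have houtd : ∀ c, T.part c ≠ T.part d → c ≠ b₁ → c ≠ b₂ → T.peck d c := by
      intro c hc hc1 hc2
      rcases T.complete d c (Ne.symm hc) with h | h
      · exact h
      · rcases huniq c h with rfl | rfl
        · exact absurd rfl hc1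
        · exact absurd rfl hc2
    by_cases hEboth : ∃ e, T.part e = T.part d ∧ e ≠ d ∧ T.peck e b₁ ∧ T.peck e b₂
    · obtain ⟨e, hepart, hed, heb1, heb2⟩ := hEboth
      have heduke : T.isDuke 3 e := by
        intro c hc
        have hcd : T.part c ≠ T.part d := fun h => hc (h.trans hepart.symm)
        by_cases hc1 : c = b₁
        · subst hc1; exact path1 heb1 (by norm_num)
        by_cases hc2 : c = b₂
        · subst hc2; exact path1 heb2 (by norm_num)
        exact path3 heb1 p1 (houtd c hcd hc1 hc2) le_rfl
      exact ⟨d, b₁, b₂, e, (peck_ne p1).symm, (peck_ne p2).symm, Ne.symm hed,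
        hb12, (peck_ne heb1).symm, (peck_ne heb2).symm,
        hd3, inNbrDuke hd hne p1, inNbrDuke hd hne p2, heduke⟩
    · push_neg at hEboth
      -- key: if one in-neighbor pecks the other, contradiction
      have key : ∀ a a', T.peck a d → T.peck a' d → T.peck a a' →
          (∀ e, T.part e = T.part d → e ≠ d → T.peck e a → ¬ T.peck e a') →
          (∀ c, T.part c ≠ T.part d → c ≠ a → c ≠ a' → T.peck d c) → False := by
        intro a a' pad pa'd paa' hnb hout
        apply h2 a ?_ pad
        intro c hc
        by_cases hcd : c = d
        · subst hcd; exact path1 pad (by norm_num)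
        by_cases hcb' : c = a'
        · subst hcb'; exact path1 paa' (by norm_num)
        by_cases hcpd : T.part c = T.part d
        · by_cases hac : T.peck a c
          · exact path1 hac (by norm_num)
          have hca : T.peck c a := by
            rcases T.complete c a hc with h | h
            · exact h
            · exact absurd h hac
          have hnca' : ¬ T.peck c a' := hnb c hcpd hcd hca
          have hca' : T.peck a' c := by
            rcases T.complete a' c (fun e => T.inter a' d pa'd (e.trans hcpd)) with h | h
            · exact h
            · exact absurd h hnca'
          exact path2 paa' hca' le_rfl
        · have hca : c ≠ a := by rintro rfl; exact hc rfl
          exact path2 pad (hout c hcpd hca hcb') le_rfl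
      by_cases hbb : T.part b₁ = T.part b₂
      · -- construct e₁ (failure of b₁) and e₂ (failure of b₂)
        have hb1n2 : ¬ T.isDuke 2 b₁ := fun h => h2 b₁ h p1
        rw [MTour.isDuke] at hb1n2
        push_neg at hb1n2
        obtain ⟨e₁, he1p, he1np⟩ := hb1n2
        have he1d : e₁ ≠ d := by rintro rfl; exact he1np (path1 p1 (by norm_num))
        have he1b1 : e₁ ≠ b₁ := by rintro rfl; exact he1p rfl
        have he1b2 : e₁ ≠ b₂ := by rintro rfl; exact he1p hbb.symm
        have he1pd : T.part e₁ = T.part d := by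
          by_contra hcon
          exact he1np (path2 p1 (houtd e₁ hcon he1b1 he1b2) le_rfl)
        have hpe1b1 : T.peck e₁ b₁ := by
          rcases T.complete e₁ b₁ he1p with h | h
          · exact h
          · exact absurd (path1 h (by norm_num)) he1np
        have hne1b2 : ¬ T.peck e₁ b₂ := hEboth e₁ he1pd he1d hpe1b1
        have hb2e1 : T.peck b₂ e₁ := by
          rcases T.complete e₁ b₂ (fun e => T.inter b₂ d p2 (e.symm ▸ he1pd)) with h | h
          · exact absurd h hne1b2
          · exact h
        -- e₂ from b₂
        have hb2n2 : ¬ T.isDuke 2 b₂ := fun h => h2 b₂ h p2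
        rw [MTour.isDuke] at hb2n2
        push_neg at hb2n2
        obtain ⟨e₂, he2p, he2np⟩ := hb2n2
        have he2d : e₂ ≠ d := by rintro rfl; exact he2np (path1 p2 (by norm_num))
        have he2b2 : e₂ ≠ b₂ := by rintro rfl; exact he2p rfl
        have he2b1 : e₂ ≠ b₁ := by rintro rfl; exact he2p hbb
        have he2pd : T.part e₂ = T.part d := by
          by_contra hcon
          exact he2np (path2 p2 (houtd e₂ hcon he2b1 he2b2) le_rfl)
        have hpe2b2 : T.peck e₂ b₂ := by
          rcases T.complete e₂ b₂ he2p with h | h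
          · exact h
          · exact absurd (path1 h (by norm_num)) he2np
        have hne2b1 : ¬ T.peck e₂ b₁ := fun h => hEboth e₂ he2pd he2d h hpe2b2
        have hb1e2 : T.peck b₁ e₂ := by
          rcases T.complete e₂ b₁ (fun e => T.inter b₁ d p1 (e.symm ▸ he2pd)) with h | h
          · exact absurd h hne2b1
          · exact h
        have he1duke : T.isDuke 3 e₁ := by
          intro c hc
          have hcd : T.part c ≠ T.part d := fun h => hc (h.trans he1pd.symm)
          by_cases hc1 : c = b₁
          · subst hc1; exact path1 hpe1b1 (by norm_num)
          by_cases hc2 : c = b₂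
          · subst hc2; exact path3 hpe1b1 hb1e2 hpe2b2 le_rfl
          exact path3 hpe1b1 p1 (houtd c hcd hc1 hc2) le_rfl
        exact ⟨d, b₁, b₂, e₁, (peck_ne p1).symm, (peck_ne p2).symm, Ne.symm he1d,
          hb12, Ne.symm he1b1, Ne.symm he1b2,
          hd3, inNbrDuke hd hne p1, inNbrDuke hd hne p2, he1duke⟩
      · exfalso
        rcases T.complete b₁ b₂ hbb with h | h
        · exact key b₁ b₂ p1 p2 h (fun e hp hd' he1 => hEboth e hp hd' he1) houtd
        · exact key b₂ b₁ p2 p1 h (fun e hp hd' he2 he1 => hEboth e hp hd' he1 he2)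
            (fun c hc hc2 hc1 => houtd c hc hc1 hc2)
  · -- exactly one in-neighbor b
    push_neg at h4
    obtain ⟨b, hb⟩ := exb
    have hbd_ne : T.part b ≠ T.part d := T.inter b d hb
    have huniq : ∀ b', T.peck b' d → b' = b := by
      intro b' hb'
      by_contra hcon
      exact h4 b' b hcon hb' hb
    have houtd : ∀ c, T.part c ≠ T.part d → c ≠ b → T.peck d c := by
      intro c hc hcb
      rcases T.complete d c (Ne.symm hc) with h | h
      · exact h
      · exact absurd (huniq c h) hcb
    have hbn2 : ¬ T.isDuke 2 b := fun h => h2 b h hb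
    rw [MTour.isDuke] at hbn2
    push_neg at hbn2
    obtain ⟨e, hep, henp⟩ := hbn2
    have heb_ne : e ≠ b := by rintro rfl; exact hep rfl
    have hed : e ≠ d := by rintro rfl; exact henp (path1 hb (by norm_num))
    have hepd : T.part e = T.part d := by
      by_contra hcon
      exact henp (path2 hb (houtd e hcon heb_ne) le_rfl)
    have heb : T.peck e b := by
      rcases T.complete e b hep with h | h
      · exact h
      · exact absurd (path1 h (by norm_num)) henp
    have hno2 : ∀ y, T.peck b y → ¬ T.peck y e := fun y hy hy' => henp (path2 hy hy' le_rfl)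
    have eDuke : ∀ e₀, T.part e₀ = T.part d → T.peck e₀ b → T.isDuke 3 e₀ := by
      intro e₀ hp0 hpb c hc
      have hcd : T.part c ≠ T.part d := fun h => hc (h.trans hp0.symm)
      by_cases hcb : c = b
      · subst hcb; exact path1 hpb (by norm_num)
      exact path3 hpb hb (houtd c hcd hcb) le_rfl
    by_cases hE2 : ∃ e', T.part e' = T.part d ∧ e' ≠ d ∧ T.peck e' b ∧ e' ≠ e
    · obtain ⟨e', hp', hd', hpb', hne'⟩ := hE2
      exact ⟨d, b, e, e', (peck_ne hb).symm, Ne.symm hed, Ne.symm hd',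
        (peck_ne heb).symm, (peck_ne hpb').symm, Ne.symm hne',
        hd3, inNbrDuke hd hne hb, eDuke e hepd heb, eDuke e' hp' hpb'⟩
    · push_neg at hE2
      have hbE : ∀ e₀, T.part e₀ = T.part d → e₀ ≠ d → e₀ ≠ e → T.peck b e₀ := by
        intro e₀ hp0 h0d h0e
        rcases T.complete b e₀ (fun h => hbd_ne (h.trans hp0)) with h | h
        · exact h
        · exact absurd (hE2 e₀ hp0 h0d h) h0e
      -- get x with d → x → e
      rcases eclipseCases hne e hepd with ⟨x, hdx, hnex⟩ | hsub
      · have hxe : T.peck x e := by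
          rcases T.complete x e (fun h => T.inter d x hdx ((h.trans hepd).symm)) with h | h
          · exact h
          · exact absurd h hnex
        by_cases hXb : ∃ x', T.peck d x' ∧ T.peck x' e ∧ T.peck x' b
        · obtain ⟨x', hdx', hx'e, hx'b⟩ := hXb
          have hx'duke : T.isDuke 3 x' := by
            intro c hc
            by_cases hcb : c = b
            · subst hcb; exact path1 hx'b (by norm_num)
            by_cases hcd : c = d
            · subst hcd; exact path2 hx'b hb (by norm_num)
            by_cases hcpd : T.part c = T.part d
            · by_cases hce : c = e
              · subst hce; exact path1 hx'e (by norm_num)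
              · exact path2 hx'b (hbE c hcpd hcd hce) (by norm_num)
            · exact path3 hx'b hb (houtd c hcpd hcb) le_rfl
          have hex' : e ≠ x' := by
            rintro rfl
            exact T.inter d e hdx' hepd.symm
          exact ⟨d, b, e, x', (peck_ne hb).symm, Ne.symm hed, (peck_ne hdx'),
            (peck_ne heb).symm, (peck_ne hx'b).symm, hex',
            hd3, inNbrDuke hd hne hb, eDuke e hepd heb, hx'duke⟩
        · have hnxb : ¬ T.peck x b := fun h => hXb ⟨x, hdx, hxe, h⟩
          have hnbx : ¬ T.peck b x := fun h => hno2 x h hxe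
          have hxpb : T.part x = T.part b := by
            by_contra hcon
            rcases T.complete x b hcon with h | h
            · exact hnxb h
            · exact hnbx h
          have hxduke : T.isDuke 3 x := by
            intro c hc
            by_cases hce : c = e
            · subst hce; exact path1 hxe (by norm_num)
            by_cases hcd : c = d
            · subst hcd; exact path3 hxe heb hb le_rfl
            by_cases hcpd : T.part c = T.part d
            · exact path3 hxe heb (hbE c hcpd hcd hce) le_rfl
            · have hcb : c ≠ b := by rintro rfl; exact hc hxpb.symm
              have hdc : T.peck d c := houtd c hcpd hcb
              have hec : T.peck e c := by
                rcases T.complete e c (fun h => hcpd (h.symm.trans hepd)) with h | h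
                · exact h
                · exfalso
                  have hcpb : T.part c ≠ T.part b := fun h' => hc (h'.trans hxpb.symm)
                  rcases T.complete c b hcpb with h' | h'
                  · exact hXb ⟨c, hdc, h, h'⟩
                  · exact hno2 c h' h
              exact path2 hxe hec (by norm_num)
          have hbx_ne : b ≠ x := by rintro rfl; exact T.asymm b d hb hdx
          have hex_ne : e ≠ x := by
            rintro rfl
            exact hbd_ne (hxpb.symm.trans hepd)
          exact ⟨d, b, e, x, (peck_ne hb).symm, Ne.symm hed, (peck_ne hdx),
            (peck_ne heb).symm, hbx_ne, hex_ne,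
            hd3, inNbrDuke hd hne hb, eDuke e hepd heb, hxduke⟩
      · exact absurd (hsub b heb) (T.asymm b d hb)
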